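/- Let h : R^m → R be convex and L-Lipschitz, t, ν > 0. Then prox_{t h_ν}(x) = (ν/(t+ν))·x + (t/(t+ν))·prox_{(t+ν)h}(x), where h_ν is the Moreau envelope of h. -/

import Mathlib

set_option maxHeartbeats 1000000

/-- Proximal map of the Moreau envelope: for `h` convex and `L`-Lipschitz and `t, ν > 0`,
`prox_{t h_ν}(x) = (ν/(t+ν)) x + (t/(t+ν)) prox_{(t+ν) h}(x)`. -/
theorem prox_of_moreau_envelope {m : ℕ}
    (h : EuclideanSpace ℝ (Fin m) → ℝ) (L t ν : ℝ)
    (hL : 0 ≤ L) (ht : 0 < t) (hν : 0 < ν)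
    (hh : ConvexOn ℝ Set.univ h)
    (hhL : ∀ u v, |h u - h v| ≤ L * ‖u - v‖)
    (x p q : EuclideanSpace ℝ (Fin m))
    -- `p = prox_{(t+ν) h}(x)`
    (hp : ∀ z, h p + ‖p - x‖ ^ 2 / (2 * (t + ν)) ≤ h z + ‖z - x‖ ^ 2 / (2 * (t + ν)))
    -- `q = prox_{t h_ν}(x)` where `h_ν` is the Moreau envelope of `h`
    (hq : ∀ z, (⨅ u, h u + ‖u - q‖ ^ 2 / (2 * ν)) + ‖q - x‖ ^ 2 / (2 * t) ≤
        (⨅ u, h u + ‖u - z‖ ^ 2 / (2 * ν)) + ‖z - x‖ ^ 2 / (2 * t)) :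
    q = (ν / (t + ν)) • x + (t / (t + ν)) • p := by
  have htν : (0:ℝ) < t + ν := by linarith
  set M : ℝ := h p + ‖p - x‖ ^ 2 / (2 * (t + ν)) with hM
  -- Key algebraic identity
  have key : ∀ u z : EuclideanSpace ℝ (Fin m),
      ‖u - z‖ ^ 2 / (2 * ν) + ‖z - x‖ ^ 2 / (2 * t)
        = ‖u - x‖ ^ 2 / (2 * (t + ν))
          + ‖t • (u - z) - ν • (z - x)‖ ^ 2 / (2 * ν * t * (t + ν)) := by
    intro u z
    have h1 : u - x = (u - z) + (z - x) := by abel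
    rw [h1]
    have e1 : ‖(u - z) + (z - x)‖ ^ 2
        = ‖u - z‖ ^ 2 + 2 * inner ℝ (u - z) (z - x) + ‖z - x‖ ^ 2 :=
      norm_add_sq_real _ _
    have e2 : ‖t • (u - z) - ν • (z - x)‖ ^ 2
        = t ^ 2 * ‖u - z‖ ^ 2 - 2 * t * ν * inner ℝ (u - z) (z - x)
          + ν ^ 2 * ‖z - x‖ ^ 2 := by
      rw [norm_sub_sq_real, norm_smul, norm_smul, real_inner_smul_left,
        real_inner_smul_right]
      simp [Real.norm_eq_abs, abs_of_pos ht, abs_of_pos hν, mul_pow]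
      ring
    rw [e1, e2]
    field_simp
    ring
  -- pointwise bound
  have bound : ∀ u z : EuclideanSpace ℝ (Fin m),
      ‖u - x‖ ^ 2 / (2 * (t + ν)) ≤ ‖u - z‖ ^ 2 / (2 * ν) + ‖z - x‖ ^ 2 / (2 * t) := by
    intro u z
    rw [key u z]
    have : 0 ≤ ‖t • (u - z) - ν • (z - x)‖ ^ 2 / (2 * ν * t * (t + ν)) := by positivity
    linarith
  -- lower bound for the objective of the envelope
  have lb : ∀ (z u : EuclideanSpace ℝ (Fin m)),
      M - ‖z - x‖ ^ 2 / (2 * t) ≤ h u + ‖u - z‖ ^ 2 / (2 * ν) := by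
    intro z u
    have := hp u
    have := bound u z
    linarith
  have bdd : ∀ z : EuclideanSpace ℝ (Fin m),
      BddBelow (Set.range fun u => h u + ‖u - z‖ ^ 2 / (2 * ν)) := by
    intro z
    exact ⟨M - ‖z - x‖ ^ 2 / (2 * t), by rintro _ ⟨u, rfl⟩; exact lb z u⟩
  have envLB : ∀ z : EuclideanSpace ℝ (Fin m),
      M - ‖z - x‖ ^ 2 / (2 * t) ≤ ⨅ u, h u + ‖u - z‖ ^ 2 / (2 * ν) :=
    fun z => le_ciInf (lb z)
  -- the candidate point
  set qs : EuclideanSpace ℝ (Fin m) := (ν / (t + ν)) • x + (t / (t + ν)) • p with hqs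
  have hpqs : p - qs = (ν / (t + ν)) • (p - x) := by
    rw [hqs]
    have : (t / (t + ν)) = 1 - ν / (t + ν) := by field_simp; ring
    rw [this]
    module
  have hqsx : qs - x = (t / (t + ν)) • (p - x) := by
    rw [hqs]
    have : (ν / (t + ν)) = 1 - t / (t + ν) := by field_simp; ring
    rw [this]
    module
  have Fqs : (⨅ u, h u + ‖u - qs‖ ^ 2 / (2 * ν)) + ‖qs - x‖ ^ 2 / (2 * t) ≤ M := by
    have h1 : (⨅ u, h u + ‖u - qs‖ ^ 2 / (2 * ν)) ≤ h p + ‖p - qs‖ ^ 2 / (2 * ν) :=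
      ciInf_le (bdd qs) p
    have h2 : ‖p - qs‖ ^ 2 = (ν / (t + ν)) ^ 2 * ‖p - x‖ ^ 2 := by
      rw [hpqs, norm_smul, mul_pow, Real.norm_eq_abs, sq_abs]
    have h3 : ‖qs - x‖ ^ 2 = (t / (t + ν)) ^ 2 * ‖p - x‖ ^ 2 := by
      rw [hqsx, norm_smul, mul_pow, Real.norm_eq_abs, sq_abs]
    have h4 : (ν / (t + ν)) ^ 2 * ‖p - x‖ ^ 2 / (2 * ν)
        + (t / (t + ν)) ^ 2 * ‖p - x‖ ^ 2 / (2 * t) = ‖p - x‖ ^ 2 / (2 * (t + ν)) := by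
      field_simp
      ring
    rw [hM]
    calc (⨅ u, h u + ‖u - qs‖ ^ 2 / (2 * ν)) + ‖qs - x‖ ^ 2 / (2 * t)
        ≤ h p + ‖p - qs‖ ^ 2 / (2 * ν) + ‖qs - x‖ ^ 2 / (2 * t) := by linarith
      _ = h p + ‖p - x‖ ^ 2 / (2 * (t + ν)) := by rw [h2, h3]; linarith
  -- F q = M
  have Fq : (⨅ u, h u + ‖u - q‖ ^ 2 / (2 * ν)) + ‖q - x‖ ^ 2 / (2 * t) = M := by
    have h1 := hq qs
    have h2 := envLB q
    linarith
  -- the vector we want to kill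
  set v : EuclideanSpace ℝ (Fin m) := (t + ν) • q - (ν • x + t • p) with hv
  have hvsmall : ∀ ε : ℝ, 0 < ε →
      ‖v‖ ^ 2 ≤ (8 * t ^ 2 * (t + ν) + 4 * ν * t * (t + ν)) * ε := by
    intro ε hε
    -- pick an ε-minimizer of the envelope at q
    have hlt : (⨅ u, h u + ‖u - q‖ ^ 2 / (2 * ν))
        < (⨅ u, h u + ‖u - q‖ ^ 2 / (2 * ν)) + ε := by linarith
    obtain ⟨u, hu⟩ := exists_lt_of_ciInf_lt hlt
    have henv : (⨅ u, h u + ‖u - q‖ ^ 2 / (2 * ν)) = M - ‖q - x‖ ^ 2 / (2 * t) := by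
      linarith
    rw [henv] at hu
    -- from key identity at (u, q):
    have hk := key u q
    have hGu : h u + ‖u - x‖ ^ 2 / (2 * (t + ν)) ≤ M + ε := by
      have h0 : 0 ≤ ‖t • (u - q) - ν • (q - x)‖ ^ 2 / (2 * ν * t * (t + ν)) := by
        positivity
      linarith
    have hcross : ‖t • (u - q) - ν • (q - x)‖ ^ 2 ≤ 2 * ν * t * (t + ν) * ε := by
      have h0 : M ≤ h u + ‖u - x‖ ^ 2 / (2 * (t + ν)) := hp u
      have h1 : ‖t • (u - q) - ν • (q - x)‖ ^ 2 / (2 * ν * t * (t + ν)) ≤ ε := by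
        linarith
      have h2 : (0:ℝ) < 2 * ν * t * (t + ν) := by positivity
      calc ‖t • (u - q) - ν • (q - x)‖ ^ 2
          = ‖t • (u - q) - ν • (q - x)‖ ^ 2 / (2 * ν * t * (t + ν)) * (2 * ν * t * (t + ν)) := by
            field_simp
        _ ≤ ε * (2 * ν * t * (t + ν)) := by
            apply mul_le_mul_of_nonneg_right h1 (le_of_lt h2)
        _ = 2 * ν * t * (t + ν) * ε := by ring
    -- strong convexity: ‖u - p‖² ≤ 4 (t+ν) ε
    have hup : ‖u - p‖ ^ 2 ≤ 4 * (t + ν) * ε := by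
      set z : EuclideanSpace ℝ (Fin m) := (1/2 : ℝ) • u + (1/2 : ℝ) • p with hz
      have hcvx : h z ≤ (1/2 : ℝ) * h u + (1/2 : ℝ) * h p := by
        have := hh.2 (Set.mem_univ u) (Set.mem_univ p)
          (by norm_num : (0:ℝ) ≤ 1/2) (by norm_num : (0:ℝ) ≤ 1/2) (by norm_num)
        exact this
      have hnorm : ‖z - x‖ ^ 2
          = ‖u - x‖ ^ 2 / 2 + ‖p - x‖ ^ 2 / 2 - ‖u - p‖ ^ 2 / 4 := by
        have hzx : z - x = (1/2 : ℝ) • ((u - x) + (p - x)) := by rw [hz]; module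
        have e1 : ‖(u - x) + (p - x)‖ ^ 2
            = ‖u - x‖ ^ 2 + 2 * inner ℝ (u - x) (p - x) + ‖p - x‖ ^ 2 :=
          norm_add_sq_real _ _
        have e2 : ‖u - p‖ ^ 2
            = ‖u - x‖ ^ 2 - 2 * inner ℝ (u - x) (p - x) + ‖p - x‖ ^ 2 := by
          have : u - p = (u - x) - (p - x) := by abel
          rw [this]
          exact norm_sub_sq_real _ _
        rw [hzx, norm_smul]
        rw [Real.norm_eq_abs]
        rw [abs_of_pos (by norm_num : (0:ℝ) < 1/2)]
        rw [mul_pow, e1, e2]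
        ring
      have hmid := hp z
      have hGp : M = h p + ‖p - x‖ ^ 2 / (2 * (t + ν)) := hM
      have hnorm' : ‖z - x‖ ^ 2 / (2 * (t + ν))
          = ‖u - x‖ ^ 2 / (2 * (t + ν)) / 2 + ‖p - x‖ ^ 2 / (2 * (t + ν)) / 2
            - ‖u - p‖ ^ 2 / (2 * (t + ν)) / 4 := by
        rw [hnorm]; ring
      have hstep : ‖u - p‖ ^ 2 / (2 * (t + ν)) ≤ 2 * ε := by linarith
      have := (div_le_iff₀ (by positivity : (0:ℝ) < 2 * (t + ν))).mp hstep
      linarith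
    -- combine
    have hvid : v = t • (u - p) - (t • (u - q) - ν • (q - x)) := by
      rw [hv]; module
    have htri : ‖v‖ ≤ t * ‖u - p‖ + ‖t • (u - q) - ν • (q - x)‖ := by
      rw [hvid]
      calc ‖t • (u - p) - (t • (u - q) - ν • (q - x))‖
          ≤ ‖t • (u - p)‖ + ‖t • (u - q) - ν • (q - x)‖ := norm_sub_le _ _
        _ = t * ‖u - p‖ + ‖t • (u - q) - ν • (q - x)‖ := by
            rw [norm_smul, Real.norm_eq_abs, abs_of_pos ht]
    have h1 : ‖v‖ ^ 2 ≤ 2 * (t * ‖u - p‖) ^ 2 + 2 * ‖t • (u - q) - ν • (q - x)‖ ^ 2 := by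
      have hsq : ‖v‖ ^ 2 ≤ (t * ‖u - p‖ + ‖t • (u - q) - ν • (q - x)‖) ^ 2 :=
        pow_le_pow_left₀ (norm_nonneg v) htri 2
      nlinarith [sq_nonneg (t * ‖u - p‖ - ‖t • (u - q) - ν • (q - x)‖)]
    have h2 : (t * ‖u - p‖) ^ 2 = t ^ 2 * ‖u - p‖ ^ 2 := by ring
    have h3 : t ^ 2 * ‖u - p‖ ^ 2 ≤ t ^ 2 * (4 * (t + ν) * ε) :=
      mul_le_mul_of_nonneg_left hup (sq_nonneg t)
    have h4 : 2 * ‖t • (u - q) - ν • (q - x)‖ ^ 2 ≤ 2 * (2 * ν * t * (t + ν) * ε) := by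
      linarith
    calc ‖v‖ ^ 2 ≤ 2 * (t * ‖u - p‖) ^ 2 + 2 * ‖t • (u - q) - ν • (q - x)‖ ^ 2 := h1
      _ ≤ 2 * (t ^ 2 * (4 * (t + ν) * ε)) + 2 * (2 * ν * t * (t + ν) * ε) := by
          rw [h2] at h1 ⊢; linarith
      _ = (8 * t ^ 2 * (t + ν) + 4 * ν * t * (t + ν)) * ε := by ring
  have hv0 : v = 0 := by
    by_contra hne
    have h0 : 0 < ‖v‖ ^ 2 := by
      have := norm_pos_iff.mpr hne
      positivity
    have hCpos : (0:ℝ) < 8 * t ^ 2 * (t + ν) + 4 * ν * t * (t + ν) := by positivity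
    have h1 := hvsmall (‖v‖ ^ 2 / (2 * (8 * t ^ 2 * (t + ν) + 4 * ν * t * (t + ν))))
      (by positivity)
    have h2 : (8 * t ^ 2 * (t + ν) + 4 * ν * t * (t + ν))
        * (‖v‖ ^ 2 / (2 * (8 * t ^ 2 * (t + ν) + 4 * ν * t * (t + ν))))
        = ‖v‖ ^ 2 / 2 := by
      field_simp
    rw [h2] at h1
    linarith
  -- conclude
  have heq : (t + ν) • q = ν • x + t • p := by
    have := sub_eq_zero.mp hv0
    exact this
  have := congrArg (fun w : EuclideanSpace ℝ (Fin m) => ((t + ν)⁻¹ : ℝ) • w) heq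
  simp only [smul_add, smul_smul] at this
  rw [inv_mul_cancel₀ (ne_of_gt htν), one_smul] at this
  rw [this]
  congr 1 <;> rw [div_eq_inv_mul]
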